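/- Let T > 0, A > 0, k > 0, η ≥ 0, let b, σ : [0,T] × ℝ → ℝ, and let π : ℝ → ℝ be continuous. Suppose θ₁, θ₂, θ₀ : [0,T] × ℝ → ℝ are continuously differentiable in t and twice continuously differentiable in s and satisfy on [0,T] × ℝ: ∂_t θ₁ + b·∂_s θ₁ + (1/2)σ²·∂_{ss} θ₁ = 0 with θ₁(T,s) = s; ∂_t θ₂ + b·∂_s θ₂ + (1/2)σ²·∂_{ss} θ₂ = 0 with θ₂(T,s) = π(s); and ∂_t θ₀ + b·∂_s θ₀ + (1/2)σ²·∂_{ss} θ₀ + (2A/(e·k))·(1 − k·η·θ₂(t,s)) = 0 with θ₀(T,s) = 0. Define u̲(t,s,q,x) = x + θ₀(t,s) + q·θ₁(t,s) − η·q²·θ₂(t,s) on [0,T] × ℝ × ℤ × ℝ. Then HJB(u̲)(t,s,q,x) ≥ 0 for all (t,s,q,x) ∈ [0,T] × ℝ × ℤ × ℝ, and u̲(T,s,q,x) = x + q·s − η·q²·π(s). -/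

import Mathlib

/-- The Hamilton–Jacobi–Bellman expression of a value function
`u : (t,s,q,x) ↦ u t s q x` for the market-making problem with intensities
`A·e^{−kδ}` and mid-price diffusion coefficients `b`, `σ`. -/
noncomputable def HJB (A k : ℝ) (b σ : ℝ → ℝ → ℝ) (u : ℝ → ℝ → ℤ → ℝ → ℝ)
    (t s : ℝ) (q : ℤ) (x : ℝ) : ℝ :=
  deriv (fun τ => u τ s q x) t
    + b t s * deriv (fun y => u t y q x) s
    + 1 / 2 * (σ t s) ^ 2 * deriv (deriv (fun y => u t y q x)) s
    + (⨆ δ : ℝ, A * Real.exp (-(k * δ)) * (u t s (q - 1) (x + s + δ) - u t s q x))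
    + (⨆ δ : ℝ, A * Real.exp (-(k * δ)) * (u t s (q + 1) (x - s + δ) - u t s q x))


private lemma deriv_comb (a c₁ c₂ : ℝ) (g₀ g₁ g₂ : ℝ → ℝ)
    (h₀ : Differentiable ℝ g₀) (h₁ : Differentiable ℝ g₁) (h₂ : Differentiable ℝ g₂) (y : ℝ) :
    deriv (fun z => a + g₀ z + c₁ * g₁ z - c₂ * g₂ z) y
      = deriv g₀ y + c₁ * deriv g₁ y - c₂ * deriv g₂ y := by
  have H : HasDerivAt (fun z => a + g₀ z + c₁ * g₁ z - c₂ * g₂ z)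
      (deriv g₀ y + c₁ * deriv g₁ y - c₂ * deriv g₂ y) y :=
    ((((h₀ y).hasDerivAt).const_add a).add (((h₁ y).hasDerivAt).const_mul c₁)).sub
      (((h₂ y).hasDerivAt).const_mul c₂)
  exact H.deriv

private lemma diff_deriv {g : ℝ → ℝ} (h : ContDiff ℝ 2 g) : Differentiable ℝ (deriv g) := by
  have h2 : ContDiff ℝ ((1 : ℕ) + 1) g := by norm_num; exact h
  exact (contDiff_succ_iff_deriv.mp h2).2.2.differentiable (by simp)

private lemma deriv_comb2 (a c₁ c₂ : ℝ) (g₀ g₁ g₂ : ℝ → ℝ)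
    (h₀ : ContDiff ℝ 2 g₀) (h₁ : ContDiff ℝ 2 g₁) (h₂ : ContDiff ℝ 2 g₂) (s : ℝ) :
    deriv (deriv (fun z => a + g₀ z + c₁ * g₁ z - c₂ * g₂ z)) s
      = deriv (deriv g₀) s + c₁ * deriv (deriv g₁) s - c₂ * deriv (deriv g₂) s := by
  have hfeq : deriv (fun z => a + g₀ z + c₁ * g₁ z - c₂ * g₂ z)
      = fun y => (0:ℝ) + deriv g₀ y + c₁ * deriv g₁ y - c₂ * deriv g₂ y := by
    funext y
    rw [deriv_comb a c₁ c₂ g₀ g₁ g₂ (h₀.differentiable two_ne_zero)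
      (h₁.differentiable two_ne_zero) (h₂.differentiable two_ne_zero) y]
    ring
  rw [hfeq, deriv_comb 0 c₁ c₂ _ _ _ (diff_deriv h₀) (diff_deriv h₁) (diff_deriv h₂) s]

private lemma sup_val (A k c : ℝ) (hA : 0 < A) (hk : 0 < k) :
    (⨆ δ : ℝ, A * Real.exp (-(k * δ)) * (δ + c))
      = A / (Real.exp 1 * k) * Real.exp (k * c) := by
  have hek : (0:ℝ) < Real.exp 1 := Real.exp_pos 1
  have hbd : ∀ δ : ℝ, A * Real.exp (-(k * δ)) * (δ + c)
      ≤ A / (Real.exp 1 * k) * Real.exp (k * c) := by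
    intro δ
    have h1 : k * (δ + c) ≤ Real.exp (k * (δ + c) - 1) := by
      have := Real.add_one_le_exp (k * (δ + c) - 1); linarith
    have h2 : Real.exp (-(k * δ)) * Real.exp (k * (δ + c) - 1)
        = Real.exp (k * c) / Real.exp 1 := by
      rw [← Real.exp_add]
      have h5 : -(k * δ) + (k * (δ + c) - 1) = k * c - 1 := by ring
      rw [h5, Real.exp_sub]
    have h3 : Real.exp (-(k * δ)) * (k * (δ + c))
        ≤ Real.exp (k * c) / Real.exp 1 :=
      h2 ▸ mul_le_mul_of_nonneg_left h1 (Real.exp_pos _).le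
    rw [div_mul_eq_mul_div, le_div_iff₀ (by positivity)]
    calc A * Real.exp (-(k * δ)) * (δ + c) * (Real.exp 1 * k)
        = (A * Real.exp 1) * (Real.exp (-(k * δ)) * (k * (δ + c))) := by ring
      _ ≤ (A * Real.exp 1) * (Real.exp (k * c) / Real.exp 1) :=
          mul_le_mul_of_nonneg_left h3 (by positivity)
      _ = A * Real.exp (k * c) := by field_simp
  refine le_antisymm (ciSup_le hbd) ?_
  have hmem := le_ciSup (f := fun δ : ℝ => A * Real.exp (-(k * δ)) * (δ + c))
    ⟨A / (Real.exp 1 * k) * Real.exp (k * c), by rintro _ ⟨δ, rfl⟩; exact hbd δ⟩ (1 / k - c)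
  have hval : A * Real.exp (-(k * (k⁻¹ - c))) * k⁻¹
      = A / (Real.exp 1 * k) * Real.exp (k * c) := by
    have h4 : -(k * (k⁻¹ - c)) = k * c - 1 := by field_simp; ring
    rw [h4, Real.exp_sub]
    field_simp
  calc A / (Real.exp 1 * k) * Real.exp (k * c)
      = A * Real.exp (-(k * (k⁻¹ - c))) * k⁻¹ := hval.symm
    _ ≤ ⨆ δ : ℝ, A * Real.exp (-(k * δ)) * (δ + c) := by simpa using hmem

/-- Subsolution claim of Theorem 3 (linear utility with general quadratic inventory
penalty `φ(s,q,x) = x + q·s − η·q²·π(s)`): with `θ₁, θ₂, θ₀` solving the stated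
backward PDEs with terminal data `s`, `π(s)`, `0` respectively, the function
`u̲(t,s,q,x) = x + θ₀(t,s) + q·θ₁(t,s) − η·q²·θ₂(t,s)` satisfies `HJB(u̲) ≥ 0`
and `u̲(T,s,q,x) = x + q·s − η·q²·π(s)`. -/
theorem stmt_7 (T A k η : ℝ) (hT : 0 < T) (hA : 0 < A) (hk : 0 < k) (hη : 0 ≤ η)
    (b σ : ℝ → ℝ → ℝ) (π : ℝ → ℝ) (hπ : Continuous π)
    (θ₀ θ₁ θ₂ : ℝ → ℝ → ℝ)
    (hθ₁t : ∀ s : ℝ, ContDiff ℝ 1 fun τ => θ₁ τ s)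
    (hθ₁s : ∀ t : ℝ, ContDiff ℝ 2 fun y => θ₁ t y)
    (hθ₁pde : ∀ t ∈ Set.Icc (0 : ℝ) T, ∀ s : ℝ,
      deriv (fun τ => θ₁ τ s) t + b t s * deriv (fun y => θ₁ t y) s
        + 1 / 2 * (σ t s) ^ 2 * deriv (deriv (fun y => θ₁ t y)) s = 0)
    (hθ₁T : ∀ s : ℝ, θ₁ T s = s)
    (hθ₂t : ∀ s : ℝ, ContDiff ℝ 1 fun τ => θ₂ τ s)
    (hθ₂s : ∀ t : ℝ, ContDiff ℝ 2 fun y => θ₂ t y)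
    (hθ₂pde : ∀ t ∈ Set.Icc (0 : ℝ) T, ∀ s : ℝ,
      deriv (fun τ => θ₂ τ s) t + b t s * deriv (fun y => θ₂ t y) s
        + 1 / 2 * (σ t s) ^ 2 * deriv (deriv (fun y => θ₂ t y)) s = 0)
    (hθ₂T : ∀ s : ℝ, θ₂ T s = π s)
    (hθ₀t : ∀ s : ℝ, ContDiff ℝ 1 fun τ => θ₀ τ s)
    (hθ₀s : ∀ t : ℝ, ContDiff ℝ 2 fun y => θ₀ t y)
    (hθ₀pde : ∀ t ∈ Set.Icc (0 : ℝ) T, ∀ s : ℝ,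
      deriv (fun τ => θ₀ τ s) t + b t s * deriv (fun y => θ₀ t y) s
        + 1 / 2 * (σ t s) ^ 2 * deriv (deriv (fun y => θ₀ t y)) s
        + 2 * A / (Real.exp 1 * k) * (1 - k * η * θ₂ t s) = 0)
    (hθ₀T : ∀ s : ℝ, θ₀ T s = 0)
    (u : ℝ → ℝ → ℤ → ℝ → ℝ)
    (hu : ∀ (t s : ℝ) (q : ℤ) (x : ℝ),
      u t s q x = x + θ₀ t s + (q : ℝ) * θ₁ t s - η * (q : ℝ) ^ 2 * θ₂ t s) :
    (∀ t ∈ Set.Icc (0 : ℝ) T, ∀ (s : ℝ) (q : ℤ) (x : ℝ),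
      0 ≤ HJB A k b σ u t s q x) ∧
    (∀ (s : ℝ) (q : ℤ) (x : ℝ),
      u T s q x = x + (q : ℝ) * s - η * (q : ℝ) ^ 2 * π s) := by
  constructor
  · intro t ht s q x
    have hM : (0:ℝ) < A / (Real.exp 1 * k) := by positivity
    -- derivative computations
    have hDt : deriv (fun τ => u τ s q x) t
        = deriv (fun τ => θ₀ τ s) t + (q:ℝ) * deriv (fun τ => θ₁ τ s) t
          - η * (q:ℝ) ^ 2 * deriv (fun τ => θ₂ τ s) t := by
      rw [show (fun τ => u τ s q x)
          = (fun τ => x + θ₀ τ s + (q:ℝ) * θ₁ τ s - η * (q:ℝ) ^ 2 * θ₂ τ s) from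
        funext fun τ => by rw [hu]]
      exact deriv_comb x ((q:ℝ)) (η * (q:ℝ) ^ 2) _ _ _
        ((hθ₀t s).differentiable one_ne_zero) ((hθ₁t s).differentiable one_ne_zero)
        ((hθ₂t s).differentiable one_ne_zero) t
    have hseq : (fun y => u t y q x)
        = (fun y => x + θ₀ t y + (q:ℝ) * θ₁ t y - η * (q:ℝ) ^ 2 * θ₂ t y) :=
      funext fun y => by rw [hu]
    have hDs : deriv (fun y => u t y q x) s
        = deriv (fun y => θ₀ t y) s + (q:ℝ) * deriv (fun y => θ₁ t y) s
          - η * (q:ℝ) ^ 2 * deriv (fun y => θ₂ t y) s := by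
      rw [hseq]
      exact deriv_comb x ((q:ℝ)) (η * (q:ℝ) ^ 2) _ _ _
        ((hθ₀s t).differentiable two_ne_zero) ((hθ₁s t).differentiable two_ne_zero)
        ((hθ₂s t).differentiable two_ne_zero) s
    have hDss : deriv (deriv (fun y => u t y q x)) s
        = deriv (deriv (fun y => θ₀ t y)) s + (q:ℝ) * deriv (deriv (fun y => θ₁ t y)) s
          - η * (q:ℝ) ^ 2 * deriv (deriv (fun y => θ₂ t y)) s := by
      rw [hseq]
      exact deriv_comb2 x ((q:ℝ)) (η * (q:ℝ) ^ 2) _ _ _ (hθ₀s t) (hθ₁s t) (hθ₂s t) s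
    -- jump terms
    have hs1 : (⨆ δ : ℝ, A * Real.exp (-(k * δ)) * (u t s (q - 1) (x + s + δ) - u t s q x))
        = A / (Real.exp 1 * k)
          * Real.exp (k * (s - θ₁ t s + η * (2 * (q:ℝ) - 1) * θ₂ t s)) := by
      have hJ : ∀ δ : ℝ, u t s (q - 1) (x + s + δ) - u t s q x
          = δ + (s - θ₁ t s + η * (2 * (q:ℝ) - 1) * θ₂ t s) := by
        intro δ; rw [hu, hu]; push_cast; ring
      simp_rw [hJ]
      exact sup_val A k _ hA hk
    have hs2 : (⨆ δ : ℝ, A * Real.exp (-(k * δ)) * (u t s (q + 1) (x - s + δ) - u t s q x))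
        = A / (Real.exp 1 * k)
          * Real.exp (k * (-s + θ₁ t s - η * (2 * (q:ℝ) + 1) * θ₂ t s)) := by
      have hJ : ∀ δ : ℝ, u t s (q + 1) (x - s + δ) - u t s q x
          = δ + (-s + θ₁ t s - η * (2 * (q:ℝ) + 1) * θ₂ t s) := by
        intro δ; rw [hu, hu]; push_cast; ring
      simp_rw [hJ]
      exact sup_val A k _ hA hk
    -- PDE identities
    have E0 := hθ₀pde t ht s
    have E1 := hθ₁pde t ht s
    have E2 := hθ₂pde t ht s
    set cp : ℝ := s - θ₁ t s + η * (2 * (q:ℝ) - 1) * θ₂ t s with hcp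
    set cm : ℝ := -s + θ₁ t s - η * (2 * (q:ℝ) + 1) * θ₂ t s with hcm
    -- key exponential inequality
    have hm : Real.exp (k * cp / 2) * Real.exp (k * cm / 2)
        = Real.exp (-(k * η * θ₂ t s)) := by
      rw [← Real.exp_add]; congr 1; rw [hcp, hcm]; ring
    have hea : Real.exp (k * cp) = Real.exp (k * cp / 2) * Real.exp (k * cp / 2) := by
      rw [← Real.exp_add]; congr 1; ring
    have heb : Real.exp (k * cm) = Real.exp (k * cm / 2) * Real.exp (k * cm / 2) := by
      rw [← Real.exp_add]; congr 1; ring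
    have hexp : 1 - k * η * θ₂ t s ≤ Real.exp (-(k * η * θ₂ t s)) := by
      have := Real.add_one_le_exp (-(k * η * θ₂ t s)); linarith
    have key : 2 * (1 - k * η * θ₂ t s) ≤ Real.exp (k * cp) + Real.exp (k * cm) := by
      nlinarith [sq_nonneg (Real.exp (k * cp / 2) - Real.exp (k * cm / 2)),
        Real.exp_pos (k * cp / 2), Real.exp_pos (k * cm / 2)]
    have hfin : A / (Real.exp 1 * k) * (2 * (1 - k * η * θ₂ t s))
        ≤ A / (Real.exp 1 * k) * (Real.exp (k * cp) + Real.exp (k * cm)) :=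
      mul_le_mul_of_nonneg_left key hM.le
    unfold HJB
    rw [hDt, hDs, hDss, hs1, hs2]
    have hX : deriv (fun τ => θ₀ τ s) t + (q:ℝ) * deriv (fun τ => θ₁ τ s) t
          - η * (q:ℝ) ^ 2 * deriv (fun τ => θ₂ τ s) t
        + b t s * (deriv (fun y => θ₀ t y) s + (q:ℝ) * deriv (fun y => θ₁ t y) s
          - η * (q:ℝ) ^ 2 * deriv (fun y => θ₂ t y) s)
        + 1 / 2 * σ t s ^ 2 * (deriv (deriv (fun y => θ₀ t y)) s
          + (q:ℝ) * deriv (deriv (fun y => θ₁ t y)) s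
          - η * (q:ℝ) ^ 2 * deriv (deriv (fun y => θ₂ t y)) s)
        + A / (Real.exp 1 * k) * Real.exp (k * cp)
        + A / (Real.exp 1 * k) * Real.exp (k * cm)
        = A / (Real.exp 1 * k) * (Real.exp (k * cp) + Real.exp (k * cm))
          - A / (Real.exp 1 * k) * (2 * (1 - k * η * θ₂ t s)) := by
      linear_combination E0 + (q:ℝ) * E1 - η * (q:ℝ) ^ 2 * E2
    linarith [hX, hfin]
  · intro s q x
    rw [hu, hθ₀T, hθ₁T, hθ₂T]
    ring
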